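/- Let X ⊆ E be a nonempty closed convex set with diameter at most D, Φ : E → ℝ differentiable with ∇Φ L-Lipschitz on X, ‖∇Φ(x)‖ ≤ G for all x ∈ X, and Φ_min ≤ Φ(x) ≤ Φ_max for all x ∈ X. Suppose F(x) = −∇Φ(x) + R(x) with ‖R(x)‖ ≤ ε for all x ∈ X. Let 0 < η ≤ 1/L and T ≥ 1, and let iterates x₀ ∈ X, x_{t+1} ∈ X satisfy for each t the projection variational inequality ⟨(x_t + η∇Φ(x_t)) − x_{t+1}, z − x_{t+1}⟩ ≤ 0 for all z ∈ X. Then there exists t̂ ∈ {0,…,T−1} such that Gap(x_{t̂}) = sup_{u ∈ X} ⟨F(x_{t̂}), x_{t̂} − u⟩ ≤ (D + ηG)·√(2(Φ_max − Φ_min)/(Tη)) + Dε. -/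

import Mathlib

open RealInnerProductSpace

set_option maxHeartbeats 1000000

lemma descent_aux {d : ℕ} (X : Set (EuclideanSpace ℝ (Fin d))) (hconv : Convex ℝ X)
    (Φ : EuclideanSpace ℝ (Fin d) → ℝ) (hΦ : Differentiable ℝ Φ)
    (L : ℝ) (hL : 0 ≤ L)
    (hlip : ∀ a ∈ X, ∀ b ∈ X, ‖gradient Φ a - gradient Φ b‖ ≤ L * ‖a - b‖)
    {a b : EuclideanSpace ℝ (Fin d)} (ha : a ∈ X) (hb : b ∈ X) :
    Φ a + ⟪gradient Φ a, b - a⟫ - L / 2 * ‖b - a‖ ^ 2 ≤ Φ b := by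
  set v := b - a with hv
  set c : ℝ → EuclideanSpace ℝ (Fin d) := fun t => a + t • v with hc
  have hcX : ∀ t ∈ Set.Icc (0:ℝ) 1, c t ∈ X := fun t ht =>
    hconv.add_smul_sub_mem ha hb ht
  have hcderiv : ∀ t : ℝ, HasDerivAt c v t := by
    intro t
    have : HasDerivAt (fun s : ℝ => s • v) ((1:ℝ) • v) t :=
      (hasDerivAt_id t).smul_const v
    have h := this.const_add a
    simp only [one_smul] at h
    exact h
  have hΦc : ∀ t : ℝ, HasDerivAt (fun s => Φ (c s)) ⟪gradient Φ (c t), v⟫ t := by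
    intro t
    have hg := (hΦ (c t)).hasGradientAt.hasFDerivAt
    have h2 : HasDerivAt (fun s => Φ (c s)) ((fderiv ℝ Φ (c t)) v) t :=
      (hΦ (c t)).hasFDerivAt.comp_hasDerivAt t (hcderiv t)
    simpa using h2
  set ψ : ℝ → ℝ := fun t => Φ (c t) - t * ⟪gradient Φ a, v⟫ + L / 2 * t ^ 2 * ‖v‖ ^ 2
    with hψ
  have hψderiv : ∀ t : ℝ,
      HasDerivAt ψ (⟪gradient Φ (c t), v⟫ - ⟪gradient Φ a, v⟫ + L / 2 * (2 * t) * ‖v‖ ^ 2) t := by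
    intro t
    have h1 := hΦc t
    have h2 : HasDerivAt (fun s : ℝ => s * ⟪gradient Φ a, v⟫) ⟪gradient Φ a, v⟫ t := by
      simpa using (hasDerivAt_id t).mul_const (⟪gradient Φ a, v⟫)
    have h3 : HasDerivAt (fun s : ℝ => L / 2 * s ^ 2 * ‖v‖ ^ 2) (L / 2 * (2 * t) * ‖v‖ ^ 2) t := by
      have := ((hasDerivAt_pow 2 t).const_mul (L/2)).mul_const (‖v‖ ^ 2)
      simpa [mul_comm, mul_assoc, mul_left_comm] using this
    exact (h1.sub h2).add h3
  have hmono : MonotoneOn ψ (Set.Icc (0:ℝ) 1) := by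
    apply monotoneOn_of_deriv_nonneg (convex_Icc 0 1)
    · have hd : Differentiable ℝ ψ := fun t => (hψderiv t).differentiableAt
      exact hd.continuous.continuousOn
    · intro t _
      exact (hψderiv t).differentiableAt.differentiableWithinAt
    · intro t ht
      rw [interior_Icc] at ht
      rw [(hψderiv t).deriv]
      have htX : c t ∈ X := hcX t ⟨le_of_lt ht.1, le_of_lt ht.2⟩
      have hbd : ‖gradient Φ (c t) - gradient Φ a‖ ≤ L * (t * ‖v‖) := by
        have := hlip (c t) htX a ha
        have hct : c t - a = t • v := by simp [hc]
        rw [hct] at this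
        simpa [norm_smul, abs_of_nonneg ht.1.le, mul_assoc] using this
      have hinner : -(L * (t * ‖v‖) * ‖v‖) ≤ ⟪gradient Φ (c t) - gradient Φ a, v⟫ := by
        have := abs_real_inner_le_norm (gradient Φ (c t) - gradient Φ a) v
        nlinarith [abs_nonneg ⟪gradient Φ (c t) - gradient Φ a, v⟫,
          neg_abs_le ⟪gradient Φ (c t) - gradient Φ a, v⟫, norm_nonneg v,
          mul_le_mul_of_nonneg_right hbd (norm_nonneg v)]
      rw [inner_sub_left] at hinner
      nlinarith
  have h01 := hmono (Set.left_mem_Icc.mpr zero_le_one) (Set.right_mem_Icc.mpr zero_le_one)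
    zero_le_one
  have hc0 : c 0 = a := by simp [hc]
  have hc1 : c 1 = b := by simp [hc, hv]
  simp only [hψ, hc0, hc1] at h01
  nlinarith [h01]

/-- Gap bound with additive non-potentiality: for exact projected ascent along `∇Φ` with
`F = −∇Φ + R`, `‖R‖ ≤ ε` on `X`, `0 < η ≤ 1/L`, and `T ≥ 1` steps, some iterate
`x_t̂`, `t̂ < T`, satisfies
`Gap(x_t̂) ≤ (D + ηG)·√(2(Φ_max − Φ_min)/(Tη)) + Dε`. -/
theorem stmt_14 {d : ℕ} (X : Set (EuclideanSpace ℝ (Fin d)))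
    (hne : X.Nonempty) (hcl : IsClosed X) (hconv : Convex ℝ X)
    (D : ℝ) (hD : ∀ a ∈ X, ∀ b ∈ X, ‖a - b‖ ≤ D)
    (Φ : EuclideanSpace ℝ (Fin d) → ℝ) (hΦ : Differentiable ℝ Φ)
    (L : ℝ) (hL : 0 < L)
    (hlip : ∀ a ∈ X, ∀ b ∈ X, ‖gradient Φ a - gradient Φ b‖ ≤ L * ‖a - b‖)
    (G : ℝ) (hG : ∀ y ∈ X, ‖gradient Φ y‖ ≤ G)
    (Φmin Φmax : ℝ) (hΦbd : ∀ y ∈ X, Φmin ≤ Φ y ∧ Φ y ≤ Φmax)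
    (F R : EuclideanSpace ℝ (Fin d) → EuclideanSpace ℝ (Fin d))
    (hF : ∀ y, F y = -gradient Φ y + R y)
    (ε : ℝ) (hR : ∀ y ∈ X, ‖R y‖ ≤ ε)
    (η : ℝ) (hη0 : 0 < η) (hη : η ≤ 1 / L)
    (T : ℕ) (hT : 1 ≤ T)
    (x : ℕ → EuclideanSpace ℝ (Fin d)) (hxX : ∀ t, x t ∈ X)
    (hVI : ∀ t, ∀ z ∈ X,
      ⟪(x t + η • gradient Φ (x t)) - x (t + 1), z - x (t + 1)⟫ ≤ 0) :
    ∃ that : ℕ, that < T ∧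
      (⨆ u : X, ⟪F (x that), x that - (u : EuclideanSpace ℝ (Fin d))⟫) ≤
        (D + η * G) * Real.sqrt (2 * (Φmax - Φmin) / (T * η)) + D * ε := by
  have hTpos : (0:ℝ) < T := by exact_mod_cast hT
  obtain ⟨x0, hx0⟩ := hne
  have hD0 : 0 ≤ D := le_trans (by simp) (hD x0 hx0 x0 hx0)
  have hG0 : 0 ≤ G := le_trans (norm_nonneg _) (hG x0 hx0)
  have hε0 : 0 ≤ ε := le_trans (norm_nonneg _) (hR x0 hx0)
  have hLη : L ≤ 1 / η := by
    rw [le_div_iff₀ hη0]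
    have := (le_div_iff₀ hL).mp hη
    linarith [mul_comm L η ▸ this]
  -- step inequality from VI at z = x t
  have hstep : ∀ t, ‖x (t+1) - x t‖ ^ 2 ≤ η * ⟪gradient Φ (x t), x (t+1) - x t⟫ := by
    intro t
    have h := hVI t (x t) (hxX t)
    rw [show (x t + η • gradient Φ (x t)) - x (t+1)
        = (x t - x (t+1)) + η • gradient Φ (x t) by abel] at h
    rw [inner_add_left, real_inner_smul_left] at h
    have h1 : ⟪x t - x (t+1), x t - x (t+1)⟫ = ‖x (t+1) - x t‖ ^ 2 := by
      rw [real_inner_self_eq_norm_sq, ← norm_neg, neg_sub]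
    have h2 : ⟪gradient Φ (x t), x t - x (t+1)⟫
        = -⟪gradient Φ (x t), x (t+1) - x t⟫ := by
      rw [← inner_neg_right, neg_sub]
    rw [h1, h2] at h
    linarith
  -- per-step potential increase
  have hinc : ∀ t, ‖x (t+1) - x t‖ ^ 2 ≤ 2 * η * (Φ (x (t+1)) - Φ (x t)) := by
    intro t
    have hdesc := descent_aux X hconv Φ hΦ L hL.le hlip (hxX t) (hxX (t+1))
    have hs := hstep t
    have hip : ‖x (t+1) - x t‖ ^ 2 / η ≤ ⟪gradient Φ (x t), x (t+1) - x t⟫ :=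
      (div_le_iff₀ hη0).mpr (by linarith [mul_comm η ⟪gradient Φ (x t), x (t+1) - x t⟫ ▸ hs])
    have hLd : L / 2 * ‖x (t+1) - x t‖ ^ 2 ≤ 1 / η / 2 * ‖x (t+1) - x t‖ ^ 2 := by
      have := sq_nonneg ‖x (t+1) - x t‖
      nlinarith
    have key : ‖x (t+1) - x t‖ ^ 2 / (2 * η) ≤ Φ (x (t+1)) - Φ (x t) := by
      have h1 : ‖x (t+1) - x t‖ ^ 2 / η - 1 / η / 2 * ‖x (t+1) - x t‖ ^ 2
          = ‖x (t+1) - x t‖ ^ 2 / (2 * η) := by field_simp; ring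
      nlinarith
    have key2 := (div_le_iff₀ (by positivity : (0:ℝ) < 2 * η)).mp key
    nlinarith [key2]
  -- sum bound
  have hsum : ∑ t ∈ Finset.range T, ‖x (t+1) - x t‖ ^ 2 ≤ 2 * η * (Φmax - Φmin) := by
    calc ∑ t ∈ Finset.range T, ‖x (t+1) - x t‖ ^ 2
        ≤ ∑ t ∈ Finset.range T, 2 * η * (Φ (x (t+1)) - Φ (x t)) :=
          Finset.sum_le_sum fun t _ => hinc t
      _ = 2 * η * (Φ (x T) - Φ (x 0)) := by
          rw [← Finset.mul_sum, Finset.sum_range_sub (fun t => Φ (x t))]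
      _ ≤ 2 * η * (Φmax - Φmin) := by
          have h1 := (hΦbd (x T) (hxX T)).2
          have h2 := (hΦbd (x 0) (hxX 0)).1
          nlinarith
  -- pigeonhole
  obtain ⟨th, hthT, hth⟩ : ∃ t ∈ Finset.range T,
      ‖x (t+1) - x t‖ ^ 2 ≤ 2 * η * (Φmax - Φmin) / T := by
    apply Finset.exists_le_of_sum_le (Finset.nonempty_range_iff.mpr (by omega))
    rw [Finset.sum_const, Finset.card_range, nsmul_eq_mul]
    rw [mul_div_cancel₀ _ (ne_of_gt hTpos)]
    exact hsum
  rw [Finset.mem_range] at hthT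
  refine ⟨th, hthT, ?_⟩
  have hXne : Nonempty X := Set.nonempty_coe_sort.mpr ⟨x0, hx0⟩
  set ρ := Real.sqrt (2 * (Φmax - Φmin) / (T * η)) with hρ
  have hρ0 : 0 ≤ ρ := Real.sqrt_nonneg _
  -- ‖δ‖ / η ≤ ρ
  have hδρ : ‖x (th+1) - x th‖ ≤ η * ρ := by
    have h1 : (η * ρ) ^ 2 = 2 * η * (Φmax - Φmin) / T := by
      rw [mul_pow, hρ, Real.sq_sqrt]
      · field_simp
      · have hΦd : 0 ≤ Φmax - Φmin := by
          have h1 := (hΦbd x0 hx0).1; have h2 := (hΦbd x0 hx0).2; linarith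
        positivity
    have := hth
    nlinarith [norm_nonneg (x (th+1) - x th), mul_nonneg hη0.le hρ0]
  apply ciSup_le
  intro u
  have huX := u.2
  set g := gradient Φ (x th) with hg
  set δ := x (th+1) - x th with hδ
  -- inner product bound from VI at z = u
  have hVIu := hVI th u huX
  rw [show (x th + η • g) - x (th+1) = (x th - x (th+1)) + η • g by rw [hg]; abel,
    inner_add_left, real_inner_smul_left] at hVIu
  have hgu : η * ⟪g, (u:EuclideanSpace ℝ (Fin d)) - x (th+1)⟫ ≤ ‖δ‖ * D := by
    have hcs := real_inner_le_norm (x (th+1) - x th) ((u:EuclideanSpace ℝ (Fin d)) - x (th+1))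
    have hnd : ‖(u:EuclideanSpace ℝ (Fin d)) - x (th+1)‖ ≤ D := hD _ huX _ (hxX (th+1))
    have h2 : ⟪x th - x (th+1), (u:EuclideanSpace ℝ (Fin d)) - x (th+1)⟫
        = -⟪x (th+1) - x th, (u:EuclideanSpace ℝ (Fin d)) - x (th+1)⟫ := by
      rw [← inner_neg_left, neg_sub]
    rw [h2] at hVIu
    nlinarith [norm_nonneg (x (th+1) - x th)]
  have hgδ : ⟪g, δ⟫ ≤ G * ‖δ‖ := by
    calc ⟪g, δ⟫ ≤ ‖g‖ * ‖δ‖ := real_inner_le_norm g δ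
      _ ≤ G * ‖δ‖ := mul_le_mul_of_nonneg_right (hG _ (hxX th)) (norm_nonneg δ)
  have hRu : ⟪R (x th), x th - (u:EuclideanSpace ℝ (Fin d))⟫ ≤ ε * D := by
    calc ⟪R (x th), x th - (u:EuclideanSpace ℝ (Fin d))⟫
        ≤ ‖R (x th)‖ * ‖x th - (u:EuclideanSpace ℝ (Fin d))‖ := real_inner_le_norm _ _
      _ ≤ ε * D := mul_le_mul (hR _ (hxX th)) (hD _ (hxX th) _ huX) (norm_nonneg _) hε0
  have hsplit : ⟪g, (u:EuclideanSpace ℝ (Fin d)) - x th⟫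
      = ⟪g, (u:EuclideanSpace ℝ (Fin d)) - x (th+1)⟫ + ⟪g, δ⟫ := by
    rw [← inner_add_right, hδ]; congr 1; abel
  have hgoal : ⟪F (x th), x th - (u:EuclideanSpace ℝ (Fin d))⟫
      = ⟪g, (u:EuclideanSpace ℝ (Fin d)) - x th⟫
        + ⟪R (x th), x th - (u:EuclideanSpace ℝ (Fin d))⟫ := by
    rw [hF, inner_add_left, inner_neg_left, ← inner_neg_right, hg]
    congr 2
    abel
  rw [hgoal, hsplit]
  have h1 : ⟪g, (u:EuclideanSpace ℝ (Fin d)) - x (th+1)⟫ ≤ D * ρ := by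
    have h0 : η * ⟪g, (u:EuclideanSpace ℝ (Fin d)) - x (th+1)⟫ ≤ (η * ρ) * D := by
      calc η * ⟪g, (u:EuclideanSpace ℝ (Fin d)) - x (th+1)⟫ ≤ ‖δ‖ * D := hgu
        _ ≤ (η * ρ) * D := mul_le_mul_of_nonneg_right hδρ hD0
    have h0' : η * ⟪g, (u:EuclideanSpace ℝ (Fin d)) - x (th+1)⟫ ≤ η * (D * ρ) :=
      h0.trans (le_of_eq (by ring))
    exact le_of_mul_le_mul_left h0' hη0
  have h2 : ⟪g, δ⟫ ≤ G * (η * ρ) :=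
    le_trans hgδ (mul_le_mul_of_nonneg_left hδρ hG0)
  have : (D + η * G) * ρ = D * ρ + G * (η * ρ) := by ring
  linarith
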